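/- Let (M, C, T_l, T_r, Π, t, i) be an admissible septuple and let w : T_r X → T_l X be a transposition morphism for an object X of M. Then the operators w_n := Π(T_l^n w) ∘ (t_n)_X ∘ i_{T_l^n X} : Z^n → Z^n make the cosimplicial object Z^n := Π(T_l^{n+1} X) para-cocyclic; explicitly, for every n and every 1 ≤ k ≤ n one has: w_n ∘ d_0 = d_n, w_n ∘ d_k = d_{k-1} ∘ w_{n-1}, w_n ∘ s_0 = s_n ∘ w_{n+1} ∘ w_{n+1}, and w_n ∘ s_k = s_{k-1} ∘ w_{n+1}. -/

import Mathlib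

/-!
Statement 0: For an admissible septuple `(M, C, T_l, T_r, Π, t, i)` and a transposition
morphism `w : T_r X ⟶ T_l X`, the operators
`w_n := Π(T_l^n w) ∘ (t_n)_X ∘ i_{T_l^n X}` make the cosimplicial object
`Z^n := Π (T_l^{n+1} X)` para-cocyclic.
-/

open CategoryTheory

universe v u v' u'

namespace Stmt0

variable {M : Type u} [Category.{v} M]

/-- `fpow T n X` is the `n`-fold application `Tⁿ X`. -/
def fpow (T : M ⥤ M) : ℕ → M → M
  | 0, X => X
  | n + 1, X => T.obj (fpow T n X)

/-- `coface T u X n k` represents the coface `d_k = Tᵏ (u_{T^{n-k} X}) : Tⁿ X ⟶ Tⁿ⁺¹ X`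
(meaningful for `k ≤ n`). -/
def coface (T : M ⥤ M) (u : 𝟭 M ⟶ T) (X : M) : (n k : ℕ) → (fpow T n X ⟶ fpow T (n + 1) X)
  | n, 0 => u.app (fpow T n X)
  | n + 1, k + 1 => T.map (coface T u X n k)
  | 0, _ + 1 => u.app X

/-- `codeg T m X n k` represents the codegeneracy `s_k = Tᵏ (m_{T^{n-k} X}) : Tⁿ⁺² X ⟶ Tⁿ⁺¹ X`
(meaningful for `k ≤ n`). -/
def codeg (T : M ⥤ M) (m : T ⋙ T ⟶ T) (X : M) : (n k : ℕ) → (fpow T (n + 2) X ⟶ fpow T (n + 1) X)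
  | n, 0 => m.app (fpow T n X)
  | n + 1, k + 1 => T.map (codeg T m X n k)
  | 0, _ + 1 => m.app X

/-- The lifted distributive law
`t_n = T_l^{n-1} t ∘ ⋯ ∘ t T_l^{n-1} : T_r T_l^n X ⟶ T_l^n T_r X`. -/
def distIter (Tl Tr : M ⥤ M) (t : Tl ⋙ Tr ⟶ Tr ⋙ Tl) (X : M) :
    (n : ℕ) → (Tr.obj (fpow Tl n X) ⟶ fpow Tl n (Tr.obj X))
  | 0 => 𝟙 (Tr.obj X)
  | n + 1 => t.app (fpow Tl n X) ≫ Tl.map (distIter Tl Tr t X n)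

/-- `T_l^n w : T_l^n Y ⟶ T_l^{n+1} X` for `w : Y ⟶ T_l X`. -/
def transIter (T : M ⥤ M) {X Y : M} (w : Y ⟶ T.obj X) : (n : ℕ) → (fpow T n Y ⟶ fpow T (n + 1) X)
  | 0 => w
  | n + 1 => T.map (transIter T w n)

variable {C : Type u'} [Category.{v'} C]

/-- The para-cocyclic operator `w_n := Π(T_l^n w) ∘ (t_n)_X ∘ i_{T_l^n X}`. -/
def paraOp (Tl Tr : M ⥤ M) (t : Tl ⋙ Tr ⟶ Tr ⋙ Tl) (P : M ⥤ C) (i : Tl ⋙ P ⟶ Tr ⋙ P)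
    {X : M} (w : Tr.obj X ⟶ Tl.obj X) (n : ℕ) :
    P.obj (fpow Tl (n + 1) X) ⟶ P.obj (fpow Tl (n + 1) X) :=
  i.app (fpow Tl n X) ≫ P.map (distIter Tl Tr t X n ≫ transIter Tl w n)

section Helpers

variable (Tl Tr : M ⥤ M) (ml : Tl ⋙ Tl ⟶ Tl) (ul : 𝟭 M ⟶ Tl)
  (mr : Tr ⋙ Tr ⟶ Tr) (ur : 𝟭 M ⟶ Tr)
  (t : Tl ⋙ Tr ⟶ Tr ⋙ Tl) (X : M) (w : Tr.obj X ⟶ Tl.obj X)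

/-- The combined morphism `T_l^n w ∘ t_n : T_r T_l^n X ⟶ T_l^{n+1} X`. -/
def fw (n : ℕ) : Tr.obj (fpow Tl n X) ⟶ fpow Tl (n + 1) X :=
  distIter Tl Tr t X n ≫ transIter Tl w n

lemma fw_zero : fw Tl Tr t X w 0 = w :=
  Category.id_comp w

lemma fw_succ (n : ℕ) :
    fw Tl Tr t X w (n + 1) = t.app (fpow Tl n X) ≫ Tl.map (fw Tl Tr t X w n) := by
  simp [fw, distIter, transIter]
  exact Category.assoc _ _ _

lemma coface_zero (u : 𝟭 M ⟶ Tl) (n : ℕ) :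
    coface Tl u X n 0 = u.app (fpow Tl n X) := by
  cases n <;> rfl

lemma coface_succ (u : 𝟭 M ⟶ Tl) (n k : ℕ) :
    coface Tl u X (n + 1) (k + 1) = Tl.map (coface Tl u X n k) := rfl

lemma codeg_zero (m : Tl ⋙ Tl ⟶ Tl) (n : ℕ) :
    codeg Tl m X n 0 = m.app (fpow Tl n X) := by
  cases n <;> rfl

lemma codeg_succ (m : Tl ⋙ Tl ⟶ Tl) (n k : ℕ) :
    codeg Tl m X (n + 1) (k + 1) = Tl.map (codeg Tl m X n k) := rfl

/-- `u_r` composed with `f_n` gives the last coface. -/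
lemma ur_fw (hw₁ : ur.app X ≫ w = ul.app X)
    (ht₃ : ∀ Y : M, ur.app (Tl.obj Y) ≫ t.app Y = Tl.map (ur.app Y)) :
    ∀ n : ℕ, ur.app (fpow Tl n X) ≫ fw Tl Tr t X w n = coface Tl ul X n n := by
  intro n
  induction n with
  | zero => rw [fw_zero]; exact hw₁
  | succ n ih =>
    have h3 : ur.app (fpow Tl (n + 1) X) ≫ t.app (fpow Tl n X) =
        Tl.map (ur.app (fpow Tl n X)) := ht₃ (fpow Tl n X)
    erw [fw_succ, coface_succ, ← Category.assoc, h3, ← Tl.map_comp, ih]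

/-- Commutation of `f` with cofaces `d_k`, `k ≤ n`. -/
lemma coface_fw
    (ht₄ : ∀ Y : M, Tr.map (ul.app Y) ≫ t.app Y = ul.app (Tr.obj Y)) :
    ∀ k n : ℕ, k ≤ n →
      Tr.map (coface Tl ul X n k) ≫ fw Tl Tr t X w (n + 1) =
        fw Tl Tr t X w n ≫ coface Tl ul X (n + 1) k := by
  intro k
  induction k with
  | zero =>
    intro n _
    erw [coface_zero, coface_zero, fw_succ, ← Category.assoc, ht₄ (fpow Tl n X)]
    have := ul.naturality (fw Tl Tr t X w n)
    exact this.symm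
  | succ k ih =>
    intro n hn
    obtain ⟨m, rfl⟩ : ∃ m, n = m + 1 := ⟨n - 1, by omega⟩
    erw [coface_succ, coface_succ, fw_succ, ← Category.assoc]
    have hnat := t.naturality (coface Tl ul X m k)
    simp only [Functor.comp_map] at hnat
    erw [hnat, Category.assoc, ← Tl.map_comp, ih m (by omega), Tl.map_comp,
      fw_succ, Category.assoc]
    rfl

/-- Commutation of `f` with codegeneracies `s_k`, `k ≤ n`. -/
lemma codeg_fw
    (ht₂ : ∀ Y : M, Tr.map (ml.app Y) ≫ t.app Y =
      t.app (Tl.obj Y) ≫ Tl.map (t.app Y) ≫ ml.app (Tr.obj Y)) :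
    ∀ k n : ℕ, k ≤ n →
      Tr.map (codeg Tl ml X n k) ≫ fw Tl Tr t X w (n + 1) =
        fw Tl Tr t X w (n + 2) ≫ codeg Tl ml X (n + 1) k := by
  intro k
  induction k with
  | zero =>
    intro n _
    erw [codeg_zero, codeg_zero, fw_succ, ← Category.assoc, ht₂ (fpow Tl n X)]
    have hnat := ml.naturality (fw Tl Tr t X w n)
    simp only [Functor.comp_map] at hnat
    erw [Category.assoc, Category.assoc, ← hnat, fw_succ (Tl := Tl) (n := n + 1),
      fw_succ, Tl.map_comp]
    exact ((Category.assoc _ _ _).trans (whisker_eq _ ((eq_whisker (Tl.map_comp _ _) _).trans (Category.assoc _ _ _)))).symm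
  | succ k ih =>
    intro n hn
    obtain ⟨m, rfl⟩ : ∃ m, n = m + 1 := ⟨n - 1, by omega⟩
    erw [codeg_succ, codeg_succ, fw_succ (n := m + 1), ← Category.assoc]
    have hnat := t.naturality (codeg Tl ml X m k)
    simp only [Functor.comp_map] at hnat
    erw [hnat, Category.assoc, ← Tl.map_comp, ih m (by omega), Tl.map_comp,
      fw_succ (n := m + 2)]
    simp [Category.assoc]
    exact (Category.assoc _ _ _).symm

/-- Key identity: `m_r ∘ f_n = s_n ∘ f_{n+1} ∘ T_r f_n`. -/
lemma mr_fw
    (ht₁ : ∀ Y : M, mr.app (Tl.obj Y) ≫ t.app Y =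
      Tr.map (t.app Y) ≫ t.app (Tr.obj Y) ≫ Tl.map (mr.app Y))
    (hw₂ : mr.app X ≫ w = Tr.map w ≫ t.app X ≫ Tl.map w ≫ ml.app X) :
    ∀ n : ℕ, mr.app (fpow Tl n X) ≫ fw Tl Tr t X w n =
      Tr.map (fw Tl Tr t X w n) ≫ fw Tl Tr t X w (n + 1) ≫ codeg Tl ml X n n := by
  intro n
  induction n with
  | zero =>
    rw [fw_zero, fw_succ, fw_zero, codeg_zero]
    exact hw₂.trans (whisker_eq _ (Category.assoc _ _ _).symm)
  | succ n ih =>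
    have h1 : mr.app (fpow Tl (n + 1) X) ≫ t.app (fpow Tl n X) =
        Tr.map (t.app (fpow Tl n X)) ≫ t.app (Tr.obj (fpow Tl n X)) ≫
          Tl.map (mr.app (fpow Tl n X)) := ht₁ (fpow Tl n X)
    erw [fw_succ, ← Category.assoc, h1, Category.assoc,
      Category.assoc, ← Tl.map_comp, ih, codeg_succ]
    have hnat := t.naturality (fw Tl Tr t X w n)
    simp only [Functor.comp_map] at hnat
    rw [fw_succ (n := n), fw_succ (n := n + 1), fw_succ (n := n)]
    simp only [Tl.map_comp, Tr.map_comp, Category.assoc]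
    refine Eq.symm ((eq_whisker (Tr.map_comp _ _) _).trans ?_)
    refine (Category.assoc _ _ _).trans (whisker_eq _ ?_)
    refine (whisker_eq _ (Category.assoc _ _ _)).trans ?_
    refine ((reassoc_of% hnat) _).trans ?_
    exact whisker_eq _ (whisker_eq _ (Tl.map_comp _ _).symm)

end Helpers

/-- For an admissible septuple and a transposition morphism `w`, the
cosimplex `Z^n = Π T_l^{n+1} X` is para-cocyclic with respect to `w_n`; explicitly
`w_n ∘ d_0 = d_n`, `w_n ∘ d_k = d_{k-1} ∘ w_{n-1}`, `w_n ∘ s_0 = s_n ∘ w_{n+1} ∘ w_{n+1}` and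
`w_n ∘ s_k = s_{k-1} ∘ w_{n+1}` for `1 ≤ k ≤ n`.  (In the second and fourth families below,
the indices have been shifted by one: `n ↦ n+1`, `k ↦ k+1`.) -/
theorem paracocyclic_of_transposition
    (Tl Tr : M ⥤ M) (ml : Tl ⋙ Tl ⟶ Tl) (ul : 𝟭 M ⟶ Tl)
    (mr : Tr ⋙ Tr ⟶ Tr) (ur : 𝟭 M ⟶ Tr)
    (P : M ⥤ C) (t : Tl ⋙ Tr ⟶ Tr ⋙ Tl) (i : Tl ⋙ P ⟶ Tr ⋙ P)
    -- `(T_l, ml, ul)` is a monad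
    (hml : ∀ X : M, Tl.map (ml.app X) ≫ ml.app X = ml.app (Tl.obj X) ≫ ml.app X)
    (hul₁ : ∀ X : M, ul.app (Tl.obj X) ≫ ml.app X = 𝟙 (Tl.obj X))
    (hul₂ : ∀ X : M, Tl.map (ul.app X) ≫ ml.app X = 𝟙 (Tl.obj X))
    -- `(T_r, mr, ur)` is a monad
    (hmr : ∀ X : M, Tr.map (mr.app X) ≫ mr.app X = mr.app (Tr.obj X) ≫ mr.app X)
    (hur₁ : ∀ X : M, ur.app (Tr.obj X) ≫ mr.app X = 𝟙 (Tr.obj X))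
    (hur₂ : ∀ X : M, Tr.map (ur.app X) ≫ mr.app X = 𝟙 (Tr.obj X))
    -- `t` is a distributive law
    (ht₁ : ∀ X : M, mr.app (Tl.obj X) ≫ t.app X =
      Tr.map (t.app X) ≫ t.app (Tr.obj X) ≫ Tl.map (mr.app X))
    (ht₂ : ∀ X : M, Tr.map (ml.app X) ≫ t.app X =
      t.app (Tl.obj X) ≫ Tl.map (t.app X) ≫ ml.app (Tr.obj X))
    (ht₃ : ∀ X : M, ur.app (Tl.obj X) ≫ t.app X = Tl.map (ur.app X))
    (ht₄ : ∀ X : M, Tr.map (ul.app X) ≫ t.app X = ul.app (Tr.obj X))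
    -- admissibility conditions on `i`
    (hi₁ : ∀ X : M, P.map (ul.app X) ≫ i.app X = P.map (ur.app X))
    (hi₂ : ∀ X : M, P.map (ml.app X) ≫ i.app X =
      i.app (Tl.obj X) ≫ P.map (t.app X) ≫ i.app (Tr.obj X) ≫ P.map (mr.app X))
    -- `w` is a transposition morphism
    (X : M) (w : Tr.obj X ⟶ Tl.obj X)
    (hw₁ : ur.app X ≫ w = ul.app X)
    (hw₂ : mr.app X ≫ w = Tr.map w ≫ t.app X ≫ Tl.map w ≫ ml.app X) :
    (∀ n : ℕ, P.map (coface Tl ul X n 0) ≫ paraOp Tl Tr t P i w n =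
      P.map (coface Tl ul X n n)) ∧
    (∀ n k : ℕ, k ≤ n →
      P.map (coface Tl ul X (n + 1) (k + 1)) ≫ paraOp Tl Tr t P i w (n + 1) =
        paraOp Tl Tr t P i w n ≫ P.map (coface Tl ul X (n + 1) k)) ∧
    (∀ n : ℕ, P.map (codeg Tl ml X n 0) ≫ paraOp Tl Tr t P i w n =
      paraOp Tl Tr t P i w (n + 1) ≫ paraOp Tl Tr t P i w (n + 1) ≫
        P.map (codeg Tl ml X n n)) ∧
    (∀ n k : ℕ, k ≤ n →
      P.map (codeg Tl ml X (n + 1) (k + 1)) ≫ paraOp Tl Tr t P i w (n + 1) =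
        paraOp Tl Tr t P i w (n + 2) ≫ P.map (codeg Tl ml X (n + 1) k)) := by
  have hpara : ∀ n : ℕ, paraOp Tl Tr t P i w n =
      i.app (fpow Tl n X) ≫ P.map (fw Tl Tr t X w n) := fun n => rfl
  refine ⟨?_, ?_, ?_, ?_⟩
  · -- w_n ∘ d_0 = d_n
    intro n
    erw [hpara, coface_zero, ← Category.assoc, hi₁ (fpow Tl n X), ← P.map_comp,
      ur_fw Tl Tr ul ur t X w hw₁ ht₃ n]
  · -- w_{n+1} ∘ d_{k+1} = d_k ∘ w_n
    intro n k hk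
    rw [hpara, hpara, coface_succ]
    have hnat := i.naturality (coface Tl ul X n k)
    simp only [Functor.comp_map] at hnat
    erw [← Category.assoc, hnat, Category.assoc, ← P.map_comp,
      coface_fw Tl Tr ul t X w ht₄ k n hk, P.map_comp, Category.assoc]
  · -- w_n ∘ s_0 = s_n ∘ w_{n+1} ∘ w_{n+1}
    intro n
    erw [hpara, hpara, codeg_zero, ← Category.assoc, hi₂ (fpow Tl n X)]
    have hnat := i.naturality (fw Tl Tr t X w n)
    simp only [Functor.comp_map] at hnat
    have hm := mr_fw Tl Tr ml mr t X w ht₁ hw₂ n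
    have hF := fw_succ Tl Tr t X w n
    refine ((Category.assoc _ _ _).trans (whisker_eq _ ((Category.assoc _ _ _).trans (whisker_eq _
      ((Category.assoc _ _ _).trans (whisker_eq _ ((P.map_comp _ _).symm.trans
        (congrArg P.map hm)))))))).trans (Eq.symm ?_)
    refine (Category.assoc _ _ _).trans (whisker_eq _ ?_)
    refine (whisker_eq _ (Category.assoc _ _ _)).trans ?_
    refine (eq_whisker ((congrArg P.map hF).trans (P.map_comp _ _)) _).trans ?_
    refine (Category.assoc _ _ _).trans (whisker_eq _ ?_)
    refine ((reassoc_of% hnat) _).trans (whisker_eq _ ?_)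
    exact ((whisker_eq _ (P.map_comp _ _).symm).trans (P.map_comp _ _).symm)
  · -- w_{n+1} ∘ s_{k+1} = s_k ∘ w_{n+2}
    intro n k hk
    rw [hpara, hpara, codeg_succ]
    have hnat := i.naturality (codeg Tl ml X n k)
    simp only [Functor.comp_map] at hnat
    erw [← Category.assoc, hnat, Category.assoc, ← P.map_comp,
      codeg_fw Tl Tr ml t X w ht₂ k n hk, P.map_comp, Category.assoc]

end Stmt0
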